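/- arXiv:2304.02318 — 3 statements merged into one kernel-verified Lean document; each statement's English description precedes it below -/
import Mathlib

section
/- Let h be a function analytic in a neighborhood of the closed unit disk in ℂ and let p be a polynomial with leading coefficient α. Then |α · h(0)| ≤ sup_{|z|=1} |h(z) p(z)|. -/
open Polynomial Metric

/-- If `h` is analytic in a neighborhood of the closed unit disk and `p` is a polynomial
with leading coefficient `α`, then `|α · h(0)| ≤ sup_{|z|=1} |h(z) p(z)|`. -/
theorem abs_leadingCoeff_mul_le_sup_sphere
    (h : ℂ → ℂ) (U : Set ℂ) (hU : IsOpen U) (hKU : closedBall (0 : ℂ) 1 ⊆ U)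
    (hh : DifferentiableOn ℂ h U) (p : Polynomial ℂ) :
    ‖p.leadingCoeff * h 0‖ ≤ ⨆ z ∈ sphere (0 : ℂ) 1, ‖h z * p.eval z‖ := by
  set q : Polynomial ℂ := (p.map (starRingEnd ℂ)).reverse with hq
  set f : ℂ → ℂ := fun z => h z * q.eval z with hf
  -- the function whose sup we take
  set v : ℂ → ℝ := fun z => ‖h z * p.eval z‖ with hv
  have hvcont : ContinuousOn v (sphere (0:ℂ) 1) :=
    (((hh.continuousOn.mono (fun z hz => hKU (sphere_subset_closedBall hz))).mul
      (p.continuous_aeval.continuousOn)).norm)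
  obtain ⟨M, hM⟩ := (isCompact_sphere (0:ℂ) 1).exists_bound_of_continuousOn hvcont
  set C : ℝ := ⨆ z ∈ sphere (0:ℂ) 1, v z with hC
  have hbdd : BddAbove (Set.range fun z => ⨆ _ : z ∈ sphere (0:ℂ) 1, v z) := by
    refine ⟨max M 0, ?_⟩
    rintro x ⟨z, rfl⟩
    by_cases hz : z ∈ sphere (0:ℂ) 1
    · simp only [ciSup_pos hz]
      exact le_max_of_le_left ((le_abs_self _).trans (hM z hz))
    · haveI : IsEmpty (z ∈ sphere (0:ℂ) 1) := ⟨hz⟩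
      exact le_max_of_le_right (le_of_eq (Real.iSup_of_isEmpty _))
  have hle : ∀ z ∈ sphere (0:ℂ) 1, v z ≤ C := by
    intro z hz
    have := le_ciSup hbdd z
    rwa [ciSup_pos hz] at this
  -- key norm identity on the sphere
  have key : ∀ z ∈ sphere (0:ℂ) 1, ‖f z‖ = v z := by
    intro z hz
    have hz1 : ‖z‖ = 1 := by simpa using hz
    have hz0 : z ≠ 0 := by intro h0; simp [h0] at hz1
    have : Invertible (z⁻¹) := invertibleOfNonzero (inv_ne_zero hz0)
    have hrev := Polynomial.eval₂_reverse_mul_pow (RingHom.id ℂ) (z⁻¹)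
      (p.map (starRingEnd ℂ))
    have hinv : (⅟ (z⁻¹) : ℂ) = z := by
      rw [invOf_eq_inv, inv_inv]
    rw [hinv] at hrev
    have hconj : (starRingEnd ℂ) z = z⁻¹ := by
      have hm : z * (starRingEnd ℂ) z = 1 := by
        rw [Complex.mul_conj]
        simp [Complex.normSq_eq_norm_sq, hz1]
      exact eq_inv_of_mul_eq_one_left (by rw [mul_comm] at hm; exact hm)
    have heval : (p.map (starRingEnd ℂ)).eval₂ (RingHom.id ℂ) (z⁻¹)
        = (starRingEnd ℂ) (p.eval z) := by
      rw [eval₂_eq_eval_map, Polynomial.map_id, eval_map, ← hconj,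
        eval₂_at_apply]
    have hq1 : ‖q.eval z‖ = ‖p.eval z‖ := by
      have h1 : ‖q.eval z * (z⁻¹) ^ (p.map (starRingEnd ℂ)).natDegree‖
          = ‖(starRingEnd ℂ) (p.eval z)‖ := by
        rw [← heval, ← hrev]
        simp [eval₂_eq_eval_map, Polynomial.map_id, hq]
      rw [norm_mul, norm_pow, norm_inv, hz1] at h1
      simpa using h1
    simp [hf, hv, norm_mul, hq1]
  have hsub : ball (0:ℂ) 1 ⊆ U := (ball_subset_closedBall).trans hKU
  have hdiff : DiffContOnCl ℂ f (ball (0:ℂ) 1) := by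
    apply DifferentiableOn.diffContOnCl
    rw [closure_ball (0:ℂ) one_ne_zero]
    exact (hh.mono hKU).mul ((Polynomial.differentiable q).differentiableOn)
  have h0mem : (0:ℂ) ∈ closure (ball (0:ℂ) 1) := by
    rw [closure_ball (0:ℂ) one_ne_zero]; exact mem_closedBall_self zero_le_one
  have hmain : ‖f 0‖ ≤ C := by
    refine Complex.norm_le_of_forall_mem_frontier_norm_le isBounded_ball hdiff ?_ h0mem
    intro z hz
    rw [frontier_ball (0:ℂ) one_ne_zero] at hz
    rw [key z hz]
    exact hle z hz
  have hf0 : ‖f 0‖ = ‖p.leadingCoeff * h 0‖ := by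
    have hq0 : q.eval 0 = (starRingEnd ℂ) p.leadingCoeff := by
      rw [← coeff_zero_eq_eval_zero, hq, coeff_zero_reverse, leadingCoeff,
        natDegree_map_eq_of_injective (starRingEnd ℂ).injective, coeff_map]
      rfl
    simp [hf, hq0, norm_mul, mul_comm]
  rw [← hf0]
  exact hmain
end

section
/- Let g ∈ L¹(𝕋) and suppose g(e^{iθ}) = −g(e^{−iθ}) for almost every θ, and for some ρ with ρ/π irrational also g(e^{i(ρ+θ)}) = −g(e^{i(ρ−θ)}) for almost every θ. Then g = 0 almost everywhere on 𝕋. -/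
open MeasureTheory Real
open Set Filter Topology
open scoped NNReal ENNReal

noncomputable section

/-- Uniqueness of Fourier coefficients for an `L¹` function on `(0, 2π]`. -/
lemma aux_ae_zero_on_Ioc_of_fourier {g : ℝ → ℂ}
    (hg : IntegrableOn g (Set.Ioc 0 (2*π)) volume)
    (hc : ∀ n : ℤ, (∫ x in Set.Ioc (0:ℝ) (2*π),
        (fourier n (x : AddCircle (2*π))) * g x) = 0) :
    ∀ᵐ x ∂(volume.restrict (Set.Ioc (0:ℝ) (2*π))), g x = 0 := by
  haveI : Fact (0 < 2*π) := ⟨by positivity⟩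
  set μ : Measure ℝ := volume.restrict (Set.Ioc (0:ℝ) (2*π)) with hμ
  haveI : IsFiniteMeasure μ := by
    constructor
    rw [hμ, Measure.restrict_apply_univ]
    exact measure_Ioc_lt_top
  have hgint : Integrable g μ := hg
  have hInt : ∀ φ : C(AddCircle (2*π), ℂ),
      Integrable (fun x : ℝ => φ (x : AddCircle (2*π)) * g x) μ := fun φ =>
    hgint.bdd_mul (c := ‖φ‖)
      ((map_continuous φ).comp (AddCircle.continuous_mk' (2*π))).aestronglyMeasurable
      (Eventually.of_forall fun x => φ.norm_coe_le_norm _)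
  let L : C(AddCircle (2*π), ℂ) →L[ℂ] ℂ := LinearMap.mkContinuous
    { toFun := fun φ => ∫ x, φ (x : AddCircle (2*π)) * g x ∂μ
      map_add' := fun φ ψ => by
        simp only [ContinuousMap.add_apply, add_mul]
        exact integral_add (hInt φ) (hInt ψ)
      map_smul' := fun c φ => by
        simp only [ContinuousMap.smul_apply, smul_eq_mul, mul_assoc, RingHom.id_apply]
        exact integral_const_mul c _ }
    (∫ x, ‖g x‖ ∂μ) (fun φ => by
      refine le_trans (norm_integral_le_integral_norm _) ?_
      have h1 : (∫ x, ‖φ (x : AddCircle (2*π)) * g x‖ ∂μ) ≤ ∫ x, ‖φ‖ * ‖g x‖ ∂μ := by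
        refine integral_mono_of_nonneg (Eventually.of_forall fun x => norm_nonneg _)
          (hgint.norm.const_mul _) (Eventually.of_forall fun x => ?_)
        dsimp only
        rw [norm_mul]
        exact mul_le_mul_of_nonneg_right (φ.norm_coe_le_norm _) (norm_nonneg _)
      refine le_trans h1 (le_of_eq ?_)
      rw [integral_const_mul]
      ring)
  have hL : ∀ φ : C(AddCircle (2*π), ℂ), L φ = ∫ x, φ (x : AddCircle (2*π)) * g x ∂μ :=
    fun φ => rfl
  have hLzero : ∀ φ : C(AddCircle (2*π), ℂ), L φ = 0 := by
    have h1 : Submodule.span ℂ (Set.range (fourier (T := 2*π))) ≤ L.ker := by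
      rw [Submodule.span_le]
      rintro - ⟨n, rfl⟩
      refine LinearMap.mem_ker.mpr ?_
      change L _ = 0
      rw [hL]
      exact hc n
    have h2 := Submodule.topologicalClosure_minimal _ h1 (ContinuousLinearMap.isClosed_ker L)
    rw [span_fourier_closure_eq_top] at h2
    exact fun φ => LinearMap.mem_ker.mp (h2 Submodule.mem_top)
  -- closed sets on the circle
  have hClosed : ∀ s : Set (AddCircle (2*π)), IsClosed s →
      (∫ x in (((↑) : ℝ → AddCircle (2*π)) ⁻¹' s), g x ∂μ) = 0 := by
    intro s hs
    have δpos : ∀ k : ℕ, (0:ℝ) < 1/(k+1) := fun k => by positivity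
    have δlim : Tendsto (fun k : ℕ => (1:ℝ)/(k+1)) atTop (𝓝 0) :=
      tendsto_one_div_add_atTop_nhds_zero_nat
    set φ : ℕ → C(AddCircle (2*π), ℂ) := fun k =>
      ⟨fun z => (((thickenedIndicator (δpos k) s z : ℝ≥0) : ℝ) : ℂ),
        Complex.continuous_ofReal.comp (NNReal.continuous_coe.comp
          (thickenedIndicator (δpos k) s).continuous)⟩ with hφdef
    have hφbd : ∀ k z, ‖φ k z‖ ≤ 1 := by
      intro k z
      simp only [hφdef, ContinuousMap.coe_mk, Complex.norm_real, Real.norm_eq_abs,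
        abs_of_nonneg (NNReal.coe_nonneg _)]
      exact_mod_cast thickenedIndicator_le_one (δpos k) s z
    have hlim : Tendsto (fun k => ∫ x, (φ k) (x : AddCircle (2*π)) * g x ∂μ) atTop
        (𝓝 (∫ x, Set.indicator (((↑) : ℝ → AddCircle (2*π)) ⁻¹' s) g x ∂μ)) := by
      refine tendsto_integral_of_dominated_convergence (fun x => ‖g x‖)
        (fun k => (hInt (φ k)).aestronglyMeasurable) hgint.norm
        (fun k => Eventually.of_forall fun x => ?_) (Eventually.of_forall fun x => ?_)
      · rw [norm_mul]
        calc ‖(φ k) (x : AddCircle (2*π))‖ * ‖g x‖ ≤ 1 * ‖g x‖ :=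
              mul_le_mul_of_nonneg_right (hφbd k _) (norm_nonneg _)
          _ = ‖g x‖ := one_mul _
      · have key := thickenedIndicator_tendsto_indicator_closure δpos δlim s
        rw [tendsto_pi_nhds] at key
        have kx := key (x : AddCircle (2*π))
        rw [hs.closure_eq] at kx
        have hcoe : Continuous (fun r : ℝ≥0 => ((r : ℝ) : ℂ)) :=
          Complex.continuous_ofReal.comp NNReal.continuous_coe
        have kx2 : Tendsto (fun k => (((thickenedIndicator (δpos k) s
            (x : AddCircle (2*π)) : ℝ≥0) : ℝ) : ℂ)) atTop
            (𝓝 (((Set.indicator s (fun _ => (1:ℝ≥0)) (x : AddCircle (2*π)) : ℝ≥0) : ℝ) : ℂ)) :=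
          (hcoe.tendsto _).comp kx
        have kx3 := kx2.mul_const (g x)
        have heq : ((((Set.indicator s (fun _ => (1:ℝ≥0)) (x : AddCircle (2*π)) : ℝ≥0) : ℝ) : ℂ))
            * g x = Set.indicator (((↑) : ℝ → AddCircle (2*π)) ⁻¹' s) g x := by
          by_cases hx : (x : AddCircle (2*π)) ∈ s
          · rw [Set.indicator_of_mem hx, Set.indicator_of_mem (show x ∈ _ ⁻¹' s from hx)]
            simp
          · rw [Set.indicator_of_notMem hx,
              Set.indicator_of_notMem (show x ∉ _ ⁻¹' s from hx)]
            simp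
        rw [heq] at kx3
        exact kx3
    have hzero : (fun k => ∫ x, (φ k) (x : AddCircle (2*π)) * g x ∂μ) = fun _ => (0:ℂ) := by
      funext k
      rw [← hL]
      exact hLzero (φ k)
    rw [hzero] at hlim
    have h0 : (∫ x, Set.indicator (((↑) : ℝ → AddCircle (2*π)) ⁻¹' s) g x ∂μ) = 0 :=
      tendsto_nhds_unique hlim tendsto_const_nhds
    rwa [integral_indicator (hs.measurableSet.preimage AddCircle.measurable_mk')] at h0
  -- all closed sets of ℝ
  refine ae_eq_zero_of_forall_setIntegral_isClosed_eq_zero hgint (fun t ht => ?_)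
  set s : Set (AddCircle (2*π)) := ((↑) : ℝ → AddCircle (2*π)) '' (t ∩ Set.Icc 0 (2*π)) with hsdef
  have hscl : IsClosed s :=
    ((isCompact_Icc.inter_left ht).image (AddCircle.continuous_mk' (2*π))).isClosed
  have hsets : ((((↑) : ℝ → AddCircle (2*π)) ⁻¹' s) ∩ Set.Ioc 0 (2*π) : Set ℝ)
      =ᵐ[volume] ((t ∩ Set.Ioc 0 (2*π) : Set ℝ)) := by
    rw [← measure_symmDiff_eq_zero_iff]
    refine measure_mono_null (fun x hx => ?_) (volume_singleton (a := 2*π))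
    rcases Set.mem_symmDiff.mp hx with ⟨⟨hxs, hxI⟩, hxt⟩ | ⟨⟨hxt, hxI⟩, hxp⟩
    · -- in preimage ∩ Ioc but not in t ∩ Ioc
      obtain ⟨y, ⟨hyt, hyI⟩, hyx⟩ := hxs
      obtain ⟨m, hm'⟩ := AddSubgroup.mem_zmultiples_iff.mp (QuotientAddGroup.eq.mp hyx)
      rw [zsmul_eq_mul] at hm'
      -- hm' : m * (2π) = -y + x
      have hπ : (0:ℝ) < 2*π := by positivity
      have hb1 : -(2*π) < (m:ℝ)*(2*π) := by
        rw [hm']; have := hyI.2; have := hxI.1; linarith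
      have hb2 : (m:ℝ)*(2*π) ≤ 2*π := by
        rw [hm']; have := hyI.1; have := hxI.2; linarith
      have hm0 : (-1:ℝ) < (m:ℝ) := by
        rw [show -(2*π) = (-1:ℝ)*(2*π) by ring] at hb1
        exact lt_of_mul_lt_mul_right (by linarith) hπ.le
      have hm1 : (m:ℝ) ≤ 1 := by
        rw [show (2:ℝ)*π = (1:ℝ)*(2*π) by ring] at hb2
        exact le_of_mul_le_mul_right (by linarith) hπ
      have : m = 0 ∨ m = 1 := by
        have h0 : (-1:ℤ) < m := by exact_mod_cast hm0
        have h1 : m ≤ 1 := by exact_mod_cast hm1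
        omega
      rcases this with rfl | rfl
      · exfalso
        rw [Int.cast_zero, zero_mul] at hm'
        have : y = x := by linarith
        rw [this] at hyt
        exact hxt ⟨hyt, hxI⟩
      · rw [Int.cast_one, one_mul] at hm'
        have hy0 : y = 0 := by
          have := hyI.1; have := hxI.2; linarith
        have : x = 2*π := by rw [hy0] at hm'; linarith
        exact this
    · -- in t ∩ Ioc but not in preimage ∩ Ioc: impossible
      exfalso
      exact hxp ⟨⟨x, ⟨hxt, Set.mem_Icc_of_Ioc hxI⟩, rfl⟩, hxI⟩
  calc ∫ x in t, g x ∂μ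
      = ∫ x in (t ∩ Set.Ioc 0 (2*π)), g x ∂volume := by
        rw [hμ, Measure.restrict_restrict ht.measurableSet]
    _ = ∫ x in ((((↑) : ℝ → AddCircle (2*π)) ⁻¹' s) ∩ Set.Ioc 0 (2*π)), g x ∂volume :=
        (setIntegral_congr_set hsets).symm
    _ = ∫ x in (((↑) : ℝ → AddCircle (2*π)) ⁻¹' s), g x ∂μ := by
        rw [hμ, Measure.restrict_restrict (hscl.measurableSet.preimage AddCircle.measurable_mk')]
    _ = 0 := hClosed s hscl

/-- If `g ∈ L¹(𝕋)` satisfies the two reflection antisymmetries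
`g(θ) = −g(−θ)` a.e. and `g(ρ+θ) = −g(ρ−θ)` a.e., with `ρ/π` irrational,
then `g = 0` a.e. -/
theorem ae_zero_of_two_antisymmetries {g : ℝ → ℂ} (hper : Function.Periodic g (2 * π))
    (hint : IntervalIntegrable g volume 0 (2 * π)) {ρ : ℝ} (hρ : Irrational (ρ / π))
    (hsym0 : ∀ᵐ θ : ℝ, g θ = -g (-θ))
    (hsymρ : ∀ᵐ θ : ℝ, g (ρ + θ) = -g (ρ - θ)) :
    ∀ᵐ θ : ℝ, g θ = 0 := by
  haveI : Fact (0 < 2 * π) := ⟨by positivity⟩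
  have hπ : (0:ℝ) < 2 * π := by positivity
  -- the exponentials
  set E : ℤ → ℝ → ℂ := fun n θ => Complex.exp ((n : ℂ) * (θ : ℂ) * Complex.I) with hE
  have hEper : ∀ n : ℤ, Function.Periodic (fun θ => E n θ * g θ) (2 * π) := by
    intro n θ
    show E n (θ + 2*π) * g (θ + 2*π) = E n θ * g θ
    rw [hper θ]
    congr 1
    show Complex.exp _ = Complex.exp _
    rw [show ((n:ℂ) * (((θ + 2*π : ℝ)):ℂ) * Complex.I)
        = (n:ℂ) * (θ:ℂ) * Complex.I + (n:ℤ) * (2*(π:ℂ)*Complex.I) by push_cast; ring,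
      Complex.exp_add, Complex.exp_int_mul_two_pi_mul_I, mul_one]
  set c : ℤ → ℂ := fun n => ∫ θ in (0:ℝ)..(2*π), E n θ * g θ with hcdef
  -- relation A
  have hA : ∀ n : ℤ, c n = - c (-n) := by
    intro n
    have e1 : c n = ∫ θ in (0:ℝ)..(2*π), E n θ * (-g (-θ)) := by
      refine intervalIntegral.integral_congr_ae ?_
      filter_upwards [hsym0] with θ hθ
      intro _
      rw [← hθ]
    have e2 : ∀ θ : ℝ, E n θ * (-g (-θ)) = -((fun u => E (-n) u * g u) (-θ)) := by
      intro θ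
      have harg : ((-n:ℤ):ℂ) * ((-θ:ℝ):ℂ) * Complex.I = (n:ℂ) * (θ:ℂ) * Complex.I := by
        push_cast; ring
      simp only [hE, harg]
      ring
    rw [e1]
    calc (∫ θ in (0:ℝ)..(2*π), E n θ * (-g (-θ)))
        = ∫ θ in (0:ℝ)..(2*π), -((fun u => E (-n) u * g u) (-θ)) := by
          exact intervalIntegral.integral_congr (fun θ _ => e2 θ)
      _ = -∫ θ in (0:ℝ)..(2*π), (fun u => E (-n) u * g u) (-θ) :=
          intervalIntegral.integral_neg
      _ = -∫ u in (-(2*π))..(-(0:ℝ)), E (-n) u * g u := by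
          rw [intervalIntegral.integral_comp_neg (fun u => E (-n) u * g u)]
      _ = - c (-n) := by
          have hsh := (hEper (-n)).intervalIntegral_add_eq (-(2*π)) 0
          simp only [neg_add_cancel, zero_add] at hsh
          rw [neg_zero, hsh]
  -- the second symmetry, recentred
  have h2 : ∀ᵐ x : ℝ, g x = -g (2*ρ - x) := by
    have hmp : MeasurePreserving (fun x : ℝ => x - ρ) volume volume :=
      measurePreserving_sub_right volume ρ
    have htd : Tendsto (fun x : ℝ => x - ρ) (ae volume) (ae volume) := by
      have := Measure.tendsto_ae_map (f := fun x : ℝ => x - ρ) (μ := volume)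
        hmp.measurable.aemeasurable
      rwa [hmp.map_eq] at this
    filter_upwards [htd.eventually hsymρ] with x hx
    rw [show ρ + (x - ρ) = x by ring, show ρ - (x - ρ) = 2*ρ - x by ring] at hx
    exact hx
  -- relation B
  have hB : ∀ n : ℤ, c n = -Complex.exp (((2*(n:ℝ)*ρ : ℝ) : ℂ) * Complex.I) * c (-n) := by
    intro n
    have e1 : c n = ∫ θ in (0:ℝ)..(2*π), E n θ * (-g (2*ρ - θ)) := by
      refine intervalIntegral.integral_congr_ae ?_
      filter_upwards [h2] with θ hθ
      intro _
      rw [← hθ]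
    have e2 : ∀ θ : ℝ, E n θ * (-g (2*ρ - θ))
        = -(Complex.exp (((2*(n:ℝ)*ρ : ℝ) : ℂ) * Complex.I)
            * ((fun u => E (-n) u * g u) (-(θ - 2*ρ)))) := by
      intro θ
      have hgarg : -(θ - 2*ρ) = 2*ρ - θ := by ring
      rw [hgarg]
      have harg : (n:ℂ) * (θ:ℂ) * Complex.I
          = ((2*(n:ℝ)*ρ : ℝ) : ℂ) * Complex.I + ((-n:ℤ):ℂ) * ((2*ρ - θ : ℝ):ℂ) * Complex.I := by
        push_cast; ring
      simp only [hE]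
      rw [harg, Complex.exp_add]
      ring
    rw [e1]
    calc (∫ θ in (0:ℝ)..(2*π), E n θ * (-g (2*ρ - θ)))
        = ∫ θ in (0:ℝ)..(2*π),
            -(Complex.exp (((2*(n:ℝ)*ρ : ℝ) : ℂ) * Complex.I)
              * ((fun u => E (-n) u * g u) (-(θ - 2*ρ)))) :=
          intervalIntegral.integral_congr (fun θ _ => e2 θ)
      _ = -(Complex.exp (((2*(n:ℝ)*ρ : ℝ) : ℂ) * Complex.I)
            * ∫ θ in (0:ℝ)..(2*π), (fun u => E (-n) u * g u) (-(θ - 2*ρ))) := by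
          rw [intervalIntegral.integral_neg, intervalIntegral.integral_const_mul]
      _ = -(Complex.exp (((2*(n:ℝ)*ρ : ℝ) : ℂ) * Complex.I)
            * ∫ y in ((0:ℝ) - 2*ρ)..(2*π - 2*ρ), (fun u => E (-n) u * g u) (-y)) := by
          rw [intervalIntegral.integral_comp_sub_right
            (fun y => (fun u => E (-n) u * g u) (-y)) (2*ρ)]
      _ = -(Complex.exp (((2*(n:ℝ)*ρ : ℝ) : ℂ) * Complex.I)
            * ∫ z in (-(2*π - 2*ρ))..(-((0:ℝ) - 2*ρ)), E (-n) z * g z) := by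
          rw [intervalIntegral.integral_comp_neg (fun u => E (-n) u * g u)]
      _ = -Complex.exp (((2*(n:ℝ)*ρ : ℝ) : ℂ) * Complex.I) * c (-n) := by
          have hsh := (hEper (-n)).intervalIntegral_add_eq (-(2*π - 2*ρ)) 0
          rw [show -((0:ℝ) - 2*ρ) = -(2*π - 2*ρ) + 2*π by ring, hsh, zero_add]
          rw [neg_mul]
  -- all coefficients vanish
  have hzero : ∀ n : ℤ, c n = 0 := by
    intro n
    rcases eq_or_ne n 0 with rfl | hn
    · have h := hA 0
      rw [neg_zero] at h
      linear_combination h / 2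
    · have hA' : c (-n) = - c n := by rw [hA n]; ring
      have h3 : c n = Complex.exp (((2*(n:ℝ)*ρ : ℝ) : ℂ) * Complex.I) * c n := by
        calc c n = -Complex.exp (((2*(n:ℝ)*ρ : ℝ) : ℂ) * Complex.I) * c (-n) := hB n
          _ = -Complex.exp (((2*(n:ℝ)*ρ : ℝ) : ℂ) * Complex.I) * (- c n) := by rw [hA']
          _ = Complex.exp (((2*(n:ℝ)*ρ : ℝ) : ℂ) * Complex.I) * c n := by ring
      have h4 : (1 - Complex.exp (((2*(n:ℝ)*ρ : ℝ) : ℂ) * Complex.I)) * c n = 0 := by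
        linear_combination h3
      have h5 : Complex.exp (((2*(n:ℝ)*ρ : ℝ) : ℂ) * Complex.I) ≠ 1 := by
        intro hexp
        rw [Complex.exp_eq_one_iff] at hexp
        obtain ⟨k, hk⟩ := hexp
        have hcc : ((2*(n:ℝ)*ρ : ℝ) : ℂ) = ((k * (2*π) : ℝ) : ℂ) := by
          apply mul_right_cancel₀ Complex.I_ne_zero
          rw [hk]; push_cast; ring
        have hreal : 2*(n:ℝ)*ρ = k * (2*π) := by exact_mod_cast hcc
        have hn' : (n:ℝ) ≠ 0 := Int.cast_ne_zero.mpr hn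
        apply hρ
        refine ⟨(k:ℚ)/(n:ℚ), ?_⟩
        have hq : (((k:ℚ)/(n:ℚ) : ℚ) : ℝ) = (k:ℝ)/(n:ℝ) := by push_cast; ring
        rw [hq, div_eq_div_iff hn' pi_ne_zero]
        linarith [hreal]
      have := mul_eq_zero.mp h4
      rcases this with h | h
      · exact absurd (by linear_combination -h) h5
      · exact h
  -- Fourier coefficients on (0, 2π] vanish
  have key1 : ∀ n : ℤ, (∫ x in Set.Ioc (0:ℝ) (2*π),
      (fourier n (x : AddCircle (2*π))) * g x) = 0 := by
    intro n
    have hiv : (∫ x in Set.Ioc (0:ℝ) (2*π), (fourier n (x : AddCircle (2*π))) * g x)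
        = ∫ x in (0:ℝ)..(2*π), (fourier n (x : AddCircle (2*π))) * g x :=
      (intervalIntegral.integral_of_le hπ.le).symm
    have hfe : ∀ x : ℝ, (fourier n (x : AddCircle (2*π))) = E n x := by
      intro x
      rw [fourier_coe_apply]
      congr 1
      have hπc : (π : ℂ) ≠ 0 := Complex.ofReal_ne_zero.mpr pi_ne_zero
      push_cast
      field_simp
    have hiv2 : (∫ x in (0:ℝ)..(2*π), (fourier n (x : AddCircle (2*π))) * g x) = c n :=
      intervalIntegral.integral_congr (fun x _ => by rw [hfe x])
    rw [hiv, hiv2]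
    exact hzero n
  have hIoc : ∀ᵐ x ∂(volume.restrict (Set.Ioc (0:ℝ) (2*π))), g x = 0 :=
    aux_ae_zero_on_Ioc_of_fourier hint.1 key1
  -- extend to all of ℝ by periodicity
  have hbad : volume ({x : ℝ | ¬ g x = 0} ∩ Set.Ioc 0 (2*π)) = 0 := by
    have h := hIoc
    rw [ae_iff] at h
    rwa [Measure.restrict_apply' measurableSet_Ioc] at h
  rw [ae_iff]
  have hcover : {x : ℝ | ¬ g x = 0} ⊆ ⋃ k : ℤ,
      (fun x : ℝ => x - k • (2*π)) ⁻¹' ({x : ℝ | ¬ g x = 0} ∩ Set.Ioc 0 (2*π)) := by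
    intro θ hθ
    refine Set.mem_iUnion.mpr ⟨toIocDiv hπ 0 θ, ⟨?_, ?_⟩⟩
    · show ¬ g (θ - toIocDiv hπ 0 θ • (2*π)) = 0
      rw [hper.sub_zsmul_eq]
      exact hθ
    · show θ - toIocDiv hπ 0 θ • (2*π) ∈ Set.Ioc 0 (2*π)
      have h := toIocMod_mem_Ioc hπ 0 θ
      rw [zero_add] at h
      exact h
  exact measure_mono_null hcover (measure_iUnion_null (fun k : ℤ =>
    (measurePreserving_sub_right volume (k • (2*π))).quasiMeasurePreserving.preimage_null hbad))

end
end

section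
/- Let Ω = (0,T) × (0,L) ⊂ ℝ² be an open rectangle with T, L > 0 and T/L irrational. If f ∈ C²(Ω) ∩ C¹(Ω̄) satisfies the wave equation ∂²f/∂t² − ∂²f/∂x² = 0 in Ω and f = 0 on the boundary ∂Ω, then f = 0 on Ω̄. -/
open Set Filter Topology
namespace WaveAux


noncomputable def fold (P s : ℝ) : ℝ :=
  if P * Int.fract (s / P) ≤ P / 2 then P * Int.fract (s / P) else P - P * Int.fract (s / P)

lemma frac_mem {P : ℝ} (hP : 0 < P) (s : ℝ) : P * Int.fract (s / P) ∈ Ico 0 P := by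
  constructor
  · exact mul_nonneg hP.le (Int.fract_nonneg _)
  · have h1 := Int.fract_lt_one (s / P)
    calc P * Int.fract (s / P) < P * 1 := by
          exact mul_lt_mul_of_pos_left h1 hP
      _ = P := mul_one P

lemma fold_mem {P : ℝ} (hP : 0 < P) (s : ℝ) : fold P s ∈ Icc 0 (P / 2) := by
  have h := frac_mem hP s
  unfold fold
  split <;> constructor <;> linarith [h.1, h.2]

lemma fold_eq_self {P s : ℝ} (hP : 0 < P) (h0 : 0 ≤ s) (h1 : s ≤ P / 2) : fold P s = s := by
  have hf : Int.fract (s / P) = s / P := by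
    rw [Int.fract_eq_self]
    constructor
    · positivity
    · rw [div_lt_one hP]; linarith
  have hs : P * Int.fract (s / P) = s := by
    rw [hf, mul_comm, div_mul_cancel₀ _ hP.ne']
  unfold fold
  rw [hs]
  split <;> linarith

lemma fold_add_period {P : ℝ} (hP : 0 < P) (s : ℝ) : fold P (s + P) = fold P s := by
  have : (s + P) / P = s / P + (1 : ℤ) := by
    push_cast; field_simp
  unfold fold
  rw [this, Int.fract_add_intCast]

lemma fold_sub_period {P : ℝ} (hP : 0 < P) (s : ℝ) : fold P (s - P) = fold P s := by
  have := fold_add_period hP (s - P)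
  rw [sub_add_cancel] at this
  exact this.symm

lemma fold_neg {P : ℝ} (hP : 0 < P) (s : ℝ) : fold P (-s) = fold P s := by
  rcases eq_or_ne (Int.fract (s / P)) 0 with h | h
  · have h' : Int.fract (-s / P) = 0 := by
      rw [neg_div, Int.fract_neg_eq_zero]; exact h
    unfold fold
    rw [h, h', mul_zero, if_pos (by linarith)]
  · have h' : Int.fract (-s / P) = 1 - Int.fract (s / P) := by
      rw [neg_div]; exact Int.fract_neg h
    have h0 : 0 < Int.fract (s / P) := lt_of_le_of_ne (Int.fract_nonneg _) (Ne.symm h)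
    have h1 : Int.fract (s / P) < 1 := Int.fract_lt_one _
    unfold fold
    rw [h']
    rcases lt_trichotomy (P * Int.fract (s / P)) (P / 2) with hlt | heq | hgt
    · have : ¬ (P * (1 - Int.fract (s / P)) ≤ P / 2) := by nlinarith
      rw [if_neg this, if_pos hlt.le]; ring
    · have : P * (1 - Int.fract (s / P)) ≤ P / 2 := by nlinarith
      rw [if_pos this, if_pos heq.le]; nlinarith
    · have : P * (1 - Int.fract (s / P)) ≤ P / 2 := by nlinarith
      rw [if_pos this, if_neg (not_le.mpr hgt)]; ring

lemma fold_eq_abs {P s : ℝ} (hP : 0 < P) (h : |s| ≤ P / 2) : fold P s = |s| := by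
  rcases le_or_gt 0 s with hs | hs
  · rw [abs_of_nonneg hs] at h ⊢
    exact fold_eq_self hP hs h
  · rw [abs_of_neg hs] at h ⊢
    rw [← fold_neg hP s]
    exact fold_eq_self hP (by linarith) h

lemma fold_in_window {P s : ℝ} (hP : 0 < P) (h0 : 0 ≤ s) (h1 : s < P) :
    fold P s = if s ≤ P / 2 then s else P - s := by
  have hf : Int.fract (s / P) = s / P := by
    rw [Int.fract_eq_self]
    exact ⟨by positivity, by rw [div_lt_one hP]; exact h1⟩
  have hs : P * Int.fract (s / P) = s := by
    rw [hf, mul_comm, div_mul_cancel₀ _ hP.ne']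
  unfold fold
  rw [hs]

lemma dense_subgroup {T L : ℝ} (hT : 0 < T) (hL : 0 < L) (hirr : Irrational (T / L)) :
    Dense ((AddSubgroup.closure {2 * L, 2 * T} : AddSubgroup ℝ) : Set ℝ) := by
  rcases (AddSubgroup.closure ({2 * L, 2 * T} : Set ℝ)).dense_or_cyclic with h | ⟨a, ha⟩
  · exact h
  · exfalso
    have hL' : (2 * L : ℝ) ∈ AddSubgroup.closure ({2 * L, 2 * T} : Set ℝ) :=
      AddSubgroup.subset_closure (by simp)
    have hT' : (2 * T : ℝ) ∈ AddSubgroup.closure ({2 * L, 2 * T} : Set ℝ) :=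
      AddSubgroup.subset_closure (by simp)
    rw [ha, AddSubgroup.mem_closure_singleton] at hL' hT'
    obtain ⟨m, hm⟩ := hL'
    obtain ⟨n, hn⟩ := hT'
    rw [zsmul_eq_mul] at hm hn
    have hm0 : (m : ℝ) ≠ 0 := by
      intro h0; rw [h0, zero_mul] at hm; linarith
    apply hirr
    refine ⟨(n : ℚ) / (m : ℚ), ?_⟩
    push_cast
    rw [div_eq_div_iff hm0 hL.ne']
    linear_combination (m : ℝ) / 2 * hn - (n : ℝ) / 2 * hm



variable {T L : ℝ} {f : ℝ × ℝ → ℂ}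

def K (T L : ℝ) : Set (ℝ × ℝ) := Icc 0 T ×ˢ Icc 0 L
def U (T L : ℝ) : Set (ℝ × ℝ) := Ioo 0 T ×ˢ Ioo 0 L

noncomputable def F (T L : ℝ) (f : ℝ × ℝ → ℂ) (p : ℝ × ℝ) : (ℝ × ℝ) →L[ℝ] ℂ :=
  fderivWithin ℝ f (K T L) p

lemma hUopen : IsOpen (U T L) := isOpen_Ioo.prod isOpen_Ioo

lemma hUK : U T L ⊆ K T L := prod_mono Ioo_subset_Icc_self Ioo_subset_Icc_self

lemma uniqK (hT : 0 < T) (hL : 0 < L) : UniqueDiffOn ℝ (K T L) :=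
  (uniqueDiffOn_Icc hT).prod (uniqueDiffOn_Icc hL)

lemma convK : Convex ℝ (K T L) := (convex_Icc _ _).prod (convex_Icc _ _)

lemma contF (hT : 0 < T) (hL : 0 < L) (hf1 : ContDiffOn ℝ 1 f (K T L)) (v : ℝ × ℝ) :
    ContinuousOn (fun p => F T L f p v) (K T L) :=
  (hf1.continuousOn_fderivWithin (uniqK hT hL) le_rfl).clm_apply continuousOn_const

lemma F_interior {p : ℝ × ℝ} (hp : p ∈ U T L) : F T L f p = fderiv ℝ f p :=
  fderivWithin_of_mem_nhds (Filter.mem_of_superset (hUopen.mem_nhds hp) hUK)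

lemma hasF (hf1 : ContDiffOn ℝ 1 f (K T L)) {p : ℝ × ℝ} (hp : p ∈ K T L) :
    HasFDerivWithinAt f (F T L f p) (K T L) p :=
  ((hf1.differentiableOn one_ne_zero) p hp).hasFDerivWithinAt

lemma sliceT (hf2 : ContDiffOn ℝ 2 f (Ioo 0 T ×ˢ Ioo 0 L)) {q : ℝ × ℝ}
    (hq : q ∈ (Ioo 0 T ×ˢ Ioo 0 L : Set (ℝ × ℝ))) :
    HasDerivAt (fun t' => f (t', q.2)) (fderiv ℝ f q (1, 0)) q.1 := by
  have hd : DifferentiableAt ℝ f q :=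
    (hf2.contDiffAt (hUopen.mem_nhds hq)).differentiableAt two_ne_zero
  exact hd.hasFDerivAt.comp_hasDerivAt_of_eq q.1
    ((hasDerivAt_id q.1).prodMk (hasDerivAt_const q.1 q.2)) (by simp)

lemma sliceX (hf2 : ContDiffOn ℝ 2 f (Ioo 0 T ×ˢ Ioo 0 L)) {q : ℝ × ℝ}
    (hq : q ∈ (Ioo 0 T ×ˢ Ioo 0 L : Set (ℝ × ℝ))) :
    HasDerivAt (fun x' => f (q.1, x')) (fderiv ℝ f q (0, 1)) q.2 := by
  have hd : DifferentiableAt ℝ f q :=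
    (hf2.contDiffAt (hUopen.mem_nhds hq)).differentiableAt two_ne_zero
  exact hd.hasFDerivAt.comp_hasDerivAt_of_eq q.2
    ((hasDerivAt_const q.2 q.1).prodMk (hasDerivAt_id q.2)) (by simp)

lemma D2_wave (hf2 : ContDiffOn ℝ 2 f (Ioo 0 T ×ˢ Ioo 0 L))
    (hwave : ∀ p ∈ (Ioo 0 T ×ˢ Ioo 0 L : Set (ℝ × ℝ)),
      deriv (fun t => deriv (fun t' => f (t', p.2)) t) p.1 =
      deriv (fun x => deriv (fun x' => f (p.1, x')) x) p.2)
    {p : ℝ × ℝ} (hp : p ∈ (Ioo 0 T ×ˢ Ioo 0 L : Set (ℝ × ℝ))) (e : ℝ)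
    (he : e = 1 ∨ e = -1) :
    fderiv ℝ (fderiv ℝ f) p (1, -e) (1, e) = 0 := by
  have hCD : ContDiffAt ℝ 2 f p := hf2.contDiffAt (hUopen.mem_nhds hp)
  have hD2 : HasFDerivAt (fderiv ℝ f) (fderiv ℝ (fderiv ℝ f) p) p :=
    ((hCD.fderiv_right (m := 1) (by norm_num)).differentiableAt one_ne_zero).hasFDerivAt
  -- time direction
  have hmemT : ∀ᶠ t in 𝓝 p.1, (t, p.2) ∈ (Ioo 0 T ×ˢ Ioo 0 L : Set (ℝ × ℝ)) := by
    have hc : Continuous (fun t : ℝ => (t, p.2)) := continuous_id.prodMk continuous_const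
    exact hc.continuousAt.preimage_mem_nhds (hUopen.mem_nhds (by simpa [U] using hp))
  have hevT : (fun t => deriv (fun t' => f (t', p.2)) t) =ᶠ[𝓝 p.1]
      fun t => fderiv ℝ f (t, p.2) (1, 0) := by
    filter_upwards [hmemT] with t ht
    exact (sliceT hf2 ht).deriv
  have hD2T : HasDerivAt (fun t => fderiv ℝ f (t, p.2) (1, 0))
      (fderiv ℝ (fderiv ℝ f) p (1, 0) (1, 0)) p.1 := by
    have h1 : HasDerivAt (fun t : ℝ => fderiv ℝ f (t, p.2)) (fderiv ℝ (fderiv ℝ f) p (1, 0)) p.1 :=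
      hD2.comp_hasDerivAt_of_eq p.1 ((hasDerivAt_id p.1).prodMk (hasDerivAt_const p.1 p.2)) (by simp)
    exact ((ContinuousLinearMap.apply ℝ ℂ ((1 : ℝ), (0 : ℝ))).hasFDerivAt).comp_hasDerivAt p.1 h1
  have hLHS : deriv (fun t => deriv (fun t' => f (t', p.2)) t) p.1 =
      fderiv ℝ (fderiv ℝ f) p (1, 0) (1, 0) := by
    rw [hevT.deriv_eq]; exact hD2T.deriv
  -- space direction
  have hmemX : ∀ᶠ x in 𝓝 p.2, (p.1, x) ∈ (Ioo 0 T ×ˢ Ioo 0 L : Set (ℝ × ℝ)) := by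
    have hc : Continuous (fun x : ℝ => (p.1, x)) := continuous_const.prodMk continuous_id
    exact hc.continuousAt.preimage_mem_nhds (hUopen.mem_nhds (by simpa [U] using hp))
  have hevX : (fun x => deriv (fun x' => f (p.1, x')) x) =ᶠ[𝓝 p.2]
      fun x => fderiv ℝ f (p.1, x) (0, 1) := by
    filter_upwards [hmemX] with x hx
    exact (sliceX hf2 hx).deriv
  have hD2X : HasDerivAt (fun x => fderiv ℝ f (p.1, x) (0, 1))
      (fderiv ℝ (fderiv ℝ f) p (0, 1) (0, 1)) p.2 := by
    have h1 : HasDerivAt (fun x : ℝ => fderiv ℝ f (p.1, x)) (fderiv ℝ (fderiv ℝ f) p (0, 1)) p.2 :=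
      hD2.comp_hasDerivAt_of_eq p.2 ((hasDerivAt_const p.2 p.1).prodMk (hasDerivAt_id p.2)) (by simp)
    exact ((ContinuousLinearMap.apply ℝ ℂ ((0 : ℝ), (1 : ℝ))).hasFDerivAt).comp_hasDerivAt p.2 h1
  have hRHS : deriv (fun x => deriv (fun x' => f (p.1, x')) x) p.2 =
      fderiv ℝ (fderiv ℝ f) p (0, 1) (0, 1) := by
    rw [hevX.deriv_eq]; exact hD2X.deriv
  have hw : fderiv ℝ (fderiv ℝ f) p (1, 0) (1, 0) = fderiv ℝ (fderiv ℝ f) p (0, 1) (0, 1) := by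
    rw [← hLHS, ← hRHS]; exact hwave p hp
  have hs : fderiv ℝ (fderiv ℝ f) p (0, 1) (1, 0) = fderiv ℝ (fderiv ℝ f) p (1, 0) (0, 1) :=
    (hCD.isSymmSndFDerivAt (by simp)) _ _
  rcases he with rfl | rfl
  · have hv : ((1 : ℝ), -(1 : ℝ)) = ((1 : ℝ), (0 : ℝ)) - ((0 : ℝ), (1 : ℝ)) := by
      simp [Prod.ext_iff]
    have hw' : ((1 : ℝ), (1 : ℝ)) = ((1 : ℝ), (0 : ℝ)) + ((0 : ℝ), (1 : ℝ)) := by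
      simp [Prod.ext_iff]
    rw [hv, hw', map_sub, ContinuousLinearMap.sub_apply, map_add, map_add]
    rw [hw, hs]
    ring
  · have hv : ((1 : ℝ), -(-1 : ℝ)) = ((1 : ℝ), (0 : ℝ)) + ((0 : ℝ), (1 : ℝ)) := by
      simp [Prod.ext_iff]
    have hw' : ((1 : ℝ), (-1 : ℝ)) = ((1 : ℝ), (0 : ℝ)) - ((0 : ℝ), (1 : ℝ)) := by
      simp [Prod.ext_iff]
    rw [hv, hw', map_add, ContinuousLinearMap.add_apply, map_sub, map_sub]
    rw [hw, hs]
    ring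


/-- Tangential derivative along a horizontal edge vanishes. -/
lemma F_t_zero (hT : 0 < T) (hL : 0 < L) (hf1 : ContDiffOn ℝ 1 f (K T L))
    (hbz : ∀ q ∈ K T L \ U T L, f q = 0) {p : ℝ × ℝ} (hp : p ∈ K T L)
    (h2 : p.2 = 0 ∨ p.2 = L) : F T L f p (1, 0) = 0 := by
  have hι : HasDerivWithinAt (fun t : ℝ => (t, p.2)) ((1 : ℝ), (0 : ℝ)) (Icc 0 T) p.1 :=
    ((hasDerivAt_id p.1).prodMk (hasDerivAt_const _ _)).hasDerivWithinAt
  have hmaps : MapsTo (fun t : ℝ => (t, p.2)) (Icc 0 T) (K T L) := fun t ht => ⟨ht, hp.2⟩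
  have hcomp : HasDerivWithinAt (f ∘ fun t : ℝ => (t, p.2)) (F T L f p (1, 0)) (Icc 0 T) p.1 :=
    (hasF hf1 hp).comp_hasDerivWithinAt_of_eq p.1 hι hmaps (by simp)
  have hzero : HasDerivWithinAt (f ∘ fun t : ℝ => (t, p.2)) 0 (Icc 0 T) p.1 := by
    apply (hasDerivWithinAt_const p.1 (Icc 0 T) (0 : ℂ)).congr
    · intro t ht
      apply hbz
      refine ⟨⟨ht, hp.2⟩, fun hU' => ?_⟩
      rcases h2 with h | h <;> rcases hU'.2 with ⟨h1', h2'⟩ <;> rw [h] at h1' h2' <;> linarith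
    · apply hbz
      refine ⟨⟨hp.1, hp.2⟩, fun hU' => ?_⟩
      rcases h2 with h | h <;> rcases hU'.2 with ⟨h1', h2'⟩ <;> rw [h] at h1' h2' <;> linarith
  have h1 := hcomp.derivWithin ((uniqueDiffOn_Icc hT) p.1 hp.1)
  have h2' := hzero.derivWithin ((uniqueDiffOn_Icc hT) p.1 hp.1)
  rw [← h1, h2']

/-- Tangential derivative along a vertical edge vanishes. -/
lemma F_x_zero (hT : 0 < T) (hL : 0 < L) (hf1 : ContDiffOn ℝ 1 f (K T L))
    (hbz : ∀ q ∈ K T L \ U T L, f q = 0) {p : ℝ × ℝ} (hp : p ∈ K T L)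
    (h1 : p.1 = 0 ∨ p.1 = T) : F T L f p (0, 1) = 0 := by
  have hι : HasDerivWithinAt (fun x : ℝ => (p.1, x)) ((0 : ℝ), (1 : ℝ)) (Icc 0 L) p.2 :=
    ((hasDerivAt_const _ _).prodMk (hasDerivAt_id p.2)).hasDerivWithinAt
  have hmaps : MapsTo (fun x : ℝ => (p.1, x)) (Icc 0 L) (K T L) := fun x hx => ⟨hp.1, hx⟩
  have hcomp : HasDerivWithinAt (f ∘ fun x : ℝ => (p.1, x)) (F T L f p (0, 1)) (Icc 0 L) p.2 :=
    (hasF hf1 hp).comp_hasDerivWithinAt_of_eq p.2 hι hmaps (by simp)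
  have hzero : HasDerivWithinAt (f ∘ fun x : ℝ => (p.1, x)) 0 (Icc 0 L) p.2 := by
    apply (hasDerivWithinAt_const p.2 (Icc 0 L) (0 : ℂ)).congr
    · intro x hx
      apply hbz
      refine ⟨⟨hp.1, hx⟩, fun hU' => ?_⟩
      rcases h1 with h | h <;> rcases hU'.1 with ⟨h1', h2'⟩ <;> rw [h] at h1' h2' <;> linarith
    · apply hbz
      refine ⟨⟨hp.1, hp.2⟩, fun hU' => ?_⟩
      rcases h1 with h | h <;> rcases hU'.1 with ⟨h1', h2'⟩ <;> rw [h] at h1' h2' <;> linarith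
  have ha := hcomp.derivWithin ((uniqueDiffOn_Icc hL) p.2 hp.2)
  have hb := hzero.derivWithin ((uniqueDiffOn_Icc hL) p.2 hp.2)
  rw [← ha, hb]



/-- A function continuous on `[0,c]` with zero derivative on `(0,c)` is constant. -/
lemma const_of_deriv_interior {g : ℝ → ℂ} {c : ℝ} (hc : 0 < c)
    (hcont : ContinuousOn g (Icc 0 c))
    (hder : ∀ s ∈ Ioo 0 c, HasDerivAt g 0 s) : g 0 = g c := by
  have stepA : ∀ s1 ∈ Ioo 0 c, ∀ s2 ∈ Ioo 0 c, s1 ≤ s2 → g s1 = g s2 := by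
    intro s1 hs1 s2 hs2 h12
    have hsub : Icc s1 s2 ⊆ Ioo 0 c := fun x hx =>
      ⟨lt_of_lt_of_le hs1.1 hx.1, lt_of_le_of_lt hx.2 hs2.2⟩
    have hcont' : ContinuousOn g (Icc s1 s2) := fun x hx =>
      ((hder x (hsub hx)).continuousAt).continuousWithinAt
    have := constant_of_has_deriv_right_zero hcont' (fun x hx =>
      (hder x (hsub ⟨hx.1, hx.2.le⟩)).hasDerivWithinAt.mono (fun y hy => hy))
    exact (this s2 ⟨h12, le_rfl⟩).symm
  have hhalf : c / 2 ∈ Ioo 0 c := ⟨by positivity, by linarith⟩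
  have hu : Tendsto (fun n : ℕ => c / (n + 2)) atTop (𝓝 0) := by
    have h := (tendsto_const_div_atTop_nhds_zero_nat c).comp (tendsto_add_atTop_nat 2)
    have heq : ((fun n : ℕ => c / (n : ℝ)) ∘ fun a : ℕ => a + 2) = fun n : ℕ => c / ((n : ℝ) + 2) := by
      funext n; simp only [Function.comp]; push_cast; ring
    rwa [heq] at h
  have humem : ∀ n : ℕ, c / (n + 2) ∈ Ioo 0 c := by
    intro n
    constructor
    · positivity
    · rw [div_lt_iff₀ (by positivity)]
      nlinarith [Nat.cast_nonneg (α := ℝ) n]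
  have huhalf : ∀ n : ℕ, c / (n + 2) ≤ c / 2 := by
    intro n
    gcongr
    linarith [Nat.cast_nonneg (α := ℝ) n]
  -- g 0 = g (c/2)
  have h0 : g 0 = g (c / 2) := by
    have h1 : Tendsto (fun n : ℕ => g (c / (n + 2))) atTop (𝓝 (g 0)) := by
      apply ((hcont 0 ⟨le_rfl, hc.le⟩).tendsto).comp
      apply tendsto_nhdsWithin_of_tendsto_nhds_of_eventually_within _ hu
      exact Eventually.of_forall fun n => ⟨(humem n).1.le, (humem n).2.le⟩
    have h2 : (fun n : ℕ => g (c / (n + 2))) = fun n : ℕ => g (c / 2) := by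
      funext n
      exact stepA _ (humem n) _ hhalf (huhalf n)
    rw [h2] at h1
    exact tendsto_nhds_unique h1 tendsto_const_nhds
  have hc2 : g (c / 2) = g c := by
    have hvmem : ∀ n : ℕ, c - c / (n + 2) ∈ Ioo 0 c := by
      intro n
      exact ⟨by linarith [(humem n).2], by linarith [(humem n).1]⟩
    have hv : Tendsto (fun n : ℕ => c - c / (n + 2)) atTop (𝓝 c) := by
      have := hu.const_sub c
      simpa using this
    have h1 : Tendsto (fun n : ℕ => g (c - c / (n + 2))) atTop (𝓝 (g c)) := by
      apply ((hcont c ⟨hc.le, le_rfl⟩).tendsto).comp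
      apply tendsto_nhdsWithin_of_tendsto_nhds_of_eventually_within _ hv
      exact Eventually.of_forall fun n => ⟨(hvmem n).1.le, (hvmem n).2.le⟩
    have h2 : (fun n : ℕ => g (c - c / (n + 2))) = fun n : ℕ => g (c / 2) := by
      funext n
      exact (stepA _ hhalf _ (hvmem n) (by linarith [huhalf n])).symm
    rw [h2] at h1
    exact (tendsto_nhds_unique tendsto_const_nhds h1)
  rw [h0, hc2]


/-- Transport of `F · (1,e)` along characteristics, positive parameter case. -/
lemma chi_transport_pos (hT : 0 < T) (hL : 0 < L)
    (hf1 : ContDiffOn ℝ 1 f (K T L)) (hf2 : ContDiffOn ℝ 2 f (Ioo 0 T ×ˢ Ioo 0 L))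
    (hwave : ∀ p ∈ (Ioo 0 T ×ˢ Ioo 0 L : Set (ℝ × ℝ)),
      deriv (fun t => deriv (fun t' => f (t', p.2)) t) p.1 =
      deriv (fun x => deriv (fun x' => f (p.1, x')) x) p.2)
    {e : ℝ} (he : e = 1 ∨ e = -1)
    {t x c : ℝ} (hc : 0 < c) (hp : (t, x) ∈ K T L) (hq : (t + c, x - c * e) ∈ K T L) :
    F T L f (t, x) (1, e) = F T L f (t + c, x - c * e) (1, e) := by
  have hUU : (Ioo 0 T ×ˢ Ioo 0 L : Set (ℝ × ℝ)) = U T L := rfl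
  rw [hUU] at hf2 hwave
  set γ : ℝ → ℝ × ℝ := fun s => (t + s, x - s * e) with hγ
  obtain ⟨⟨ht0, htT⟩, hx0, hxL⟩ := hp
  obtain ⟨⟨hqt0, hqtT⟩, hqx0, hqxL⟩ := hq
  simp only [K, Icc, mem_setOf_eq] at ht0 htT hx0 hxL hqt0 hqtT hqx0 hqxL ⊢
  have hseg : ∀ s ∈ Icc (0:ℝ) c, γ s ∈ K T L := by
    intro s hs
    obtain ⟨hs0, hsc⟩ := hs
    refine ⟨⟨by simp only [hγ]; linarith, by simp only [hγ]; linarith⟩, ?_, ?_⟩ <;>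
      simp only [hγ] <;> rcases he with rfl | rfl <;> nlinarith
  have hint : ∀ s ∈ Ioo (0:ℝ) c, γ s ∈ U T L := by
    intro s hs
    obtain ⟨hs0, hsc⟩ := hs
    refine ⟨⟨by simp only [hγ]; linarith, by simp only [hγ]; linarith⟩, ?_, ?_⟩ <;>
      simp only [hγ] <;> rcases he with rfl | rfl <;> nlinarith
  have hγc : Continuous γ := by
    apply Continuous.prodMk
    · exact continuous_const.add continuous_id
    · exact continuous_const.sub (continuous_id.mul continuous_const)
  have hgc : ContinuousOn (fun s => F T L f (γ s) (1, e)) (Icc 0 c) :=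
    (contF hT hL hf1 (1, e)).comp hγc.continuousOn hseg
  have hder : ∀ s ∈ Ioo (0:ℝ) c, HasDerivAt (fun s' => F T L f (γ s') (1, e)) 0 s := by
    intro s hs
    have hUs := hint s hs
    have hev : (fun s' => F T L f (γ s') (1, e)) =ᶠ[𝓝 s] fun s' => fderiv ℝ f (γ s') (1, e) := by
      have hnb : ∀ᶠ s' in 𝓝 s, γ s' ∈ U T L :=
        hγc.continuousAt.preimage_mem_nhds (hUopen.mem_nhds hUs)
      filter_upwards [hnb] with s' hs'
      rw [F_interior hs']
    have hγ' : HasDerivAt γ ((1 : ℝ), -e) s := by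
      have h1 : HasDerivAt (fun s : ℝ => t + s) 1 s := (hasDerivAt_id s).const_add t
      have h2 : HasDerivAt (fun s : ℝ => x - s * e) (-e) s := by
        simpa using ((hasDerivAt_id s).mul_const e).const_sub x
      exact h1.prodMk h2
    have hCD : ContDiffAt ℝ 2 f (γ s) := hf2.contDiffAt (hUopen.mem_nhds hUs)
    have hD2 : HasFDerivAt (fderiv ℝ f) (fderiv ℝ (fderiv ℝ f) (γ s)) (γ s) :=
      ((hCD.fderiv_right (m := 1) (by norm_num)).differentiableAt one_ne_zero).hasFDerivAt
    have hmain : HasDerivAt (fun s' => fderiv ℝ f (γ s') (1, e))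
        (fderiv ℝ (fderiv ℝ f) (γ s) (1, -e) (1, e)) s := by
      have h1 := hD2.comp_hasDerivAt s hγ'
      exact ((ContinuousLinearMap.apply ℝ ℂ ((1 : ℝ), e)).hasFDerivAt).comp_hasDerivAt s h1
    rw [D2_wave hf2 hwave hUs e he] at hmain
    exact hmain.congr_of_eventuallyEq hev
  have hconst := const_of_deriv_interior hc hgc hder
  simpa [hγ] using hconst

/-- Transport of `F · (1,e)` along characteristics. -/
lemma chi_transport (hT : 0 < T) (hL : 0 < L)
    (hf1 : ContDiffOn ℝ 1 f (K T L)) (hf2 : ContDiffOn ℝ 2 f (Ioo 0 T ×ˢ Ioo 0 L))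
    (hwave : ∀ p ∈ (Ioo 0 T ×ˢ Ioo 0 L : Set (ℝ × ℝ)),
      deriv (fun t => deriv (fun t' => f (t', p.2)) t) p.1 =
      deriv (fun x => deriv (fun x' => f (p.1, x')) x) p.2)
    {e : ℝ} (he : e = 1 ∨ e = -1)
    {t x c : ℝ} (hp : (t, x) ∈ K T L) (hq : (t + c, x - c * e) ∈ K T L) :
    F T L f (t, x) (1, e) = F T L f (t + c, x - c * e) (1, e) := by
  rcases lt_trichotomy c 0 with h | rfl | h
  · have h2 : ((t + c) + -c, (x - c * e) - (-c) * e) = ((t : ℝ), (x : ℝ)) := by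
      rw [Prod.mk.injEq]; constructor <;> ring
    have := chi_transport_pos hT hL hf1 hf2 hwave he (neg_pos.mpr h) hq (h2 ▸ hp)
    rw [h2] at this
    exact this.symm
  · norm_num
  · exact chi_transport_pos hT hL hf1 hf2 hwave he h hp hq


lemma fold_sub_int {P : ℝ} (hP : 0 < P) (s : ℝ) (n : ℤ) : fold P (s - n * P) = fold P s := by
  have h : (s - n * P) / P = s / P + (-n : ℤ) := by
    push_cast
    field_simp
    ring
  unfold fold
  rw [h, Int.fract_add_intCast]

noncomputable def Phi (T L : ℝ) (f : ℝ × ℝ → ℂ) (s : ℝ) : ℂ :=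
  F T L f (min s T, s - min s T) (1, 1)

noncomputable def Psi (T L : ℝ) (f : ℝ × ℝ → ℂ) (s : ℝ) : ℂ :=
  F T L f (max s 0, max s 0 - s) (1, -1)

lemma clm_sum (G : (ℝ × ℝ) →L[ℝ] ℂ) :
    G (1, 1) + G (1, -1) = (2 : ℝ) • G (1, 0) := by
  rw [← map_smul, ← map_add]
  congr 1
  norm_num [Prod.ext_iff]

lemma clm_diff (G : (ℝ × ℝ) →L[ℝ] ℂ) :
    G (1, 1) - G (1, -1) = (2 : ℝ) • G (0, 1) := by
  rw [← map_smul, ← map_sub]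
  congr 1
  norm_num [Prod.ext_iff]

section main
variable {T L : ℝ} {f : ℝ × ℝ → ℂ}

lemma phi_eq (hT : 0 < T) (hL : 0 < L)
    (hf1 : ContDiffOn ℝ 1 f (K T L)) (hf2 : ContDiffOn ℝ 2 f (Ioo 0 T ×ˢ Ioo 0 L))
    (hwave : ∀ p ∈ (Ioo 0 T ×ˢ Ioo 0 L : Set (ℝ × ℝ)),
      deriv (fun t => deriv (fun t' => f (t', p.2)) t) p.1 =
      deriv (fun x => deriv (fun x' => f (p.1, x')) x) p.2)
    {t x : ℝ} (h : (t, x) ∈ K T L) :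
    F T L f (t, x) (1, 1) = Phi T L f (t + x) := by
  obtain ⟨⟨ht0, htT⟩, hx0, hxL⟩ := h
  set s := t + x with hs
  have hmin1 : min s T ≤ s := min_le_left _ _
  have hmin2 : min s T ≤ T := min_le_right _ _
  have hmin0 : 0 ≤ min s T := le_min (by linarith) hT.le
  have hsL : s - min s T ≤ L := by
    rcases le_total s T with h' | h'
    · rw [min_eq_left h']; linarith
    · rw [min_eq_right h']; linarith
  dsimp only at ht0 htT hx0 hxL
  have hq : (t + (min s T - t), x - (min s T - t) * 1) ∈ K T L := by
    refine ⟨⟨?_, ?_⟩, ?_, ?_⟩ <;> dsimp only <;> linarith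
  have htr := chi_transport hT hL hf1 hf2 hwave (Or.inl rfl)
    (⟨⟨ht0, htT⟩, hx0, hxL⟩ : ((t, x) : ℝ × ℝ) ∈ K T L) hq
  rw [htr]
  unfold Phi
  congr 2
  rw [Prod.mk.injEq]
  constructor <;> ring

lemma psi_eq (hT : 0 < T) (hL : 0 < L)
    (hf1 : ContDiffOn ℝ 1 f (K T L)) (hf2 : ContDiffOn ℝ 2 f (Ioo 0 T ×ˢ Ioo 0 L))
    (hwave : ∀ p ∈ (Ioo 0 T ×ˢ Ioo 0 L : Set (ℝ × ℝ)),
      deriv (fun t => deriv (fun t' => f (t', p.2)) t) p.1 =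
      deriv (fun x => deriv (fun x' => f (p.1, x')) x) p.2)
    {t x : ℝ} (h : (t, x) ∈ K T L) :
    F T L f (t, x) (1, -1) = Psi T L f (t - x) := by
  obtain ⟨⟨ht0, htT⟩, hx0, hxL⟩ := h
  set s := t - x with hs
  have hmax1 : s ≤ max s 0 := le_max_left _ _
  have hmax2 : (0:ℝ) ≤ max s 0 := le_max_right _ _
  have hmaxT : max s 0 ≤ T := max_le (by linarith) hT.le
  have hsL : max s 0 - s ≤ L := by
    rcases le_total 0 s with h' | h'
    · rw [max_eq_left h']; linarith
    · rw [max_eq_right h']; linarith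
  dsimp only at ht0 htT hx0 hxL
  have hq : (t + (max s 0 - t), x - (max s 0 - t) * (-1)) ∈ K T L := by
    refine ⟨⟨?_, ?_⟩, ?_, ?_⟩ <;> dsimp only <;> linarith
  have htr := chi_transport hT hL hf1 hf2 hwave (Or.inr rfl)
    (⟨⟨ht0, htT⟩, hx0, hxL⟩ : ((t, x) : ℝ × ℝ) ∈ K T L) hq
  rw [htr]
  unfold Psi
  congr 2
  rw [Prod.mk.injEq]
  constructor <;> ring

lemma cont_Phi (hT : 0 < T) (hL : 0 < L) (hf1 : ContDiffOn ℝ 1 f (K T L)) :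
    ContinuousOn (Phi T L f) (Icc 0 (T + L)) := by
  apply (contF hT hL hf1 ((1 : ℝ), (1 : ℝ))).comp
  · exact ((continuous_id.min continuous_const).prodMk
      (continuous_id.sub (continuous_id.min continuous_const))).continuousOn
  · intro s hs
    obtain ⟨hs0, hs1⟩ := hs
    have hmin1 : min s T ≤ s := min_le_left _ _
    have hmin0 : 0 ≤ min s T := le_min hs0 hT.le
    have hsL : s - min s T ≤ L := by
      rcases le_total s T with h' | h'
      · rw [min_eq_left h']; linarith
      · rw [min_eq_right h']; linarith
    refine ⟨⟨?_, ?_⟩, ?_, ?_⟩ <;> dsimp only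
    · exact hmin0
    · exact min_le_right _ _
    · linarith
    · exact hsL

end main

section edges
variable {T L : ℝ} {f : ℝ × ℝ → ℂ}
variable (hT : 0 < T) (hL : 0 < L)
  (hf1 : ContDiffOn ℝ 1 f (K T L)) (hf2 : ContDiffOn ℝ 2 f (Ioo 0 T ×ˢ Ioo 0 L))
  (hwave : ∀ p ∈ (Ioo 0 T ×ˢ Ioo 0 L : Set (ℝ × ℝ)),
    deriv (fun t => deriv (fun t' => f (t', p.2)) t) p.1 =
    deriv (fun x => deriv (fun x' => f (p.1, x')) x) p.2)
  (hbz : ∀ q ∈ K T L \ U T L, f q = 0)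

include hT hL hf1 hf2 hwave hbz

lemma rel_e1 {s : ℝ} (hs : s ∈ Icc 0 T) : Phi T L f s = - Psi T L f s := by
  have hpK : ((s, (0:ℝ)) : ℝ × ℝ) ∈ K T L := ⟨hs, le_rfl, hL.le⟩
  have hA : Phi T L f s = F T L f (s, 0) (1, 1) := by
    rw [phi_eq hT hL hf1 hf2 hwave hpK, add_zero]
  have hB : Psi T L f s = F T L f (s, 0) (1, -1) := by
    rw [psi_eq hT hL hf1 hf2 hwave hpK, sub_zero]
  have h10 := F_t_zero hT hL hf1 hbz hpK (Or.inl rfl)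
  have hsum := clm_sum (F T L f (s, 0))
  rw [h10, smul_zero] at hsum
  have : Phi T L f s + Psi T L f s = 0 := by rw [hA, hB]; exact hsum
  exact eq_neg_of_add_eq_zero_left this

lemma rel_e2 {s : ℝ} (hs : s ∈ Icc 0 L) : Phi T L f s = Psi T L f (-s) := by
  have hpK : (((0:ℝ), s) : ℝ × ℝ) ∈ K T L := ⟨⟨le_rfl, hT.le⟩, hs⟩
  have hA : Phi T L f s = F T L f (0, s) (1, 1) := by
    rw [phi_eq hT hL hf1 hf2 hwave hpK, zero_add]
  have hB : Psi T L f (-s) = F T L f (0, s) (1, -1) := by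
    rw [psi_eq hT hL hf1 hf2 hwave hpK, zero_sub]
  have h01 := F_x_zero hT hL hf1 hbz hpK (Or.inl rfl)
  have hdiff := clm_diff (F T L f (0, s))
  rw [h01, smul_zero] at hdiff
  rw [hA, hB]
  exact sub_eq_zero.mp hdiff

lemma rel_e3 {s : ℝ} (hs : s ∈ Icc 0 L) : Phi T L f (T + s) = Psi T L f (T - s) := by
  have hpK : ((T, s) : ℝ × ℝ) ∈ K T L := ⟨⟨hT.le, le_rfl⟩, hs⟩
  have hA : Phi T L f (T + s) = F T L f (T, s) (1, 1) :=
    (phi_eq hT hL hf1 hf2 hwave hpK).symm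
  have hB : Psi T L f (T - s) = F T L f (T, s) (1, -1) :=
    (psi_eq hT hL hf1 hf2 hwave hpK).symm
  have h01 := F_x_zero hT hL hf1 hbz hpK (Or.inr rfl)
  have hdiff := clm_diff (F T L f (T, s))
  rw [h01, smul_zero] at hdiff
  rw [hA, hB]
  exact sub_eq_zero.mp hdiff

lemma rel_e4 {s : ℝ} (hs : s ∈ Icc 0 T) : Phi T L f (s + L) = - Psi T L f (s - L) := by
  have hpK : ((s, L) : ℝ × ℝ) ∈ K T L := ⟨hs, ⟨hL.le, le_rfl⟩⟩
  have hA : Phi T L f (s + L) = F T L f (s, L) (1, 1) :=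
    (phi_eq hT hL hf1 hf2 hwave hpK).symm
  have hB : Psi T L f (s - L) = F T L f (s, L) (1, -1) :=
    (psi_eq hT hL hf1 hf2 hwave hpK).symm
  have h10 := F_t_zero hT hL hf1 hbz hpK (Or.inr rfl)
  have hsum := clm_sum (F T L f (s, L))
  rw [h10, smul_zero] at hsum
  have : Phi T L f (s + L) + Psi T L f (s - L) = 0 := by rw [hA, hB]; exact hsum
  exact eq_neg_of_add_eq_zero_left this

lemma key : ∀ s : ℝ, ‖Phi T L f (fold (2*(T+L)) s)‖ =
    ‖Psi T L f (T - fold (2*(T+L)) (s - T))‖ := by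
  set P := 2*(T+L) with hPdef
  have hP0 : 0 < P := by rw [hPdef]; linarith
  have hPhalf : P / 2 = T + L := by rw [hPdef]; ring
  have hred : ∀ s : ℝ, ∃ n : ℤ, s - n * P ∈ Ico 0 P := by
    intro s
    refine ⟨⌊s / P⌋, ?_⟩
    have h1 : s - (⌊s / P⌋ : ℤ) * P = P * Int.fract (s / P) := by
      rw [Int.fract]
      field_simp
    rw [h1]
    exact frac_mem hP0 s
  intro s
  obtain ⟨n, hn0, hnP⟩ := hred s
  have h1 : fold P s = fold P (s - n * P) := (fold_sub_int hP0 s n).symm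
  have h2 : fold P (s - T) = fold P ((s - n * P) - T) := by
    rw [show (s - n * P) - T = (s - T) - n * P by ring, fold_sub_int hP0]
  rw [h1, h2]
  set u := s - n * P with hu
  clear_value u
  rcases le_or_gt u T with hc1 | hc1
  · -- u ∈ [0, T]
    have hfu : fold P u = u := fold_eq_self hP0 hn0 (by linarith)
    have hfut : fold P (u - T) = T - u := by
      rw [← fold_neg hP0, show -(u - T) = T - u by ring]
      exact fold_eq_self hP0 (by linarith) (by linarith)
    rw [hfu, hfut, show T - (T - u) = u by ring,
      rel_e1 hT hL hf1 hf2 hwave hbz ⟨hn0, hc1⟩]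
    exact norm_neg _
  rcases le_or_gt u (T + L) with hc2 | hc2
  · -- u ∈ (T, T+L]
    have hfu : fold P u = u := fold_eq_self hP0 (by linarith) (by linarith)
    have hfut : fold P (u - T) = u - T :=
      fold_eq_self hP0 (by linarith) (by linarith)
    have h3 := rel_e3 hT hL hf1 hf2 hwave hbz
      (⟨by linarith, by linarith⟩ : u - T ∈ Icc 0 L)
    rw [show T + (u - T) = u by ring] at h3
    rw [hfu, hfut, h3]
  rcases le_or_gt u (2*T + L) with hc3 | hc3
  · -- u ∈ (T+L, 2T+L]
    have hfu : fold P u = P - u := by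
      rw [fold_in_window hP0 (by linarith) hnP, if_neg (by rw [hPhalf]; linarith)]
    have hfut : fold P (u - T) = u - T :=
      fold_eq_self hP0 (by linarith) (by rw [hPhalf]; linarith)
    have h4 := rel_e4 hT hL hf1 hf2 hwave hbz
      (⟨by linarith, by linarith⟩ : 2*T + L - u ∈ Icc 0 T)
    rw [show 2*T + L - u + L = P - u by rw [hPdef]; ring,
      show 2*T + L - u - L = 2*T - u by ring] at h4
    rw [hfu, hfut, show T - (u - T) = 2*T - u by ring, h4]
    exact norm_neg _
  · -- u ∈ (2T+L, P)
    have hfu : fold P u = P - u := by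
      rw [fold_in_window hP0 (by linarith) hnP, if_neg (by rw [hPhalf]; linarith)]
    have hfut : fold P (u - T) = P - (u - T) := by
      rw [fold_in_window hP0 (by linarith) (by linarith), if_neg (by rw [hPhalf]; linarith)]
    have h5 := rel_e2 hT hL hf1 hf2 hwave hbz
      (⟨by linarith [hnP], by rw [hPdef] at hnP ⊢; linarith⟩ : P - u ∈ Icc 0 L)
    rw [hfu, hfut, show T - (P - (u - T)) = -(P - u) by ring, h5]

end edges

end WaveAux

open Set Filter Topology WaveAux in
/-- Uniqueness for the homogeneous Dirichlet problem for the 1-d wave equation on a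
rectangle `(0,T) × (0,L)` with irrational side ratio `T/L`: a solution of class
`C²` inside and `C¹` up to the boundary vanishing on the boundary vanishes identically. -/
theorem wave_dirichlet_uniqueness (T L : ℝ) (hT : 0 < T) (hL : 0 < L)
    (hirr : Irrational (T / L)) (f : ℝ × ℝ → ℂ)
    (hf2 : ContDiffOn ℝ 2 f (Ioo 0 T ×ˢ Ioo 0 L))
    (hf1 : ContDiffOn ℝ 1 f (Icc 0 T ×ˢ Icc 0 L))
    (hwave : ∀ p ∈ Ioo 0 T ×ˢ Ioo 0 L,
      deriv (fun t => deriv (fun t' => f (t', p.2)) t) p.1 =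
      deriv (fun x => deriv (fun x' => f (p.1, x')) x) p.2)
    (hbdry : ∀ p ∈ frontier (Ioo 0 T ×ˢ Ioo 0 L), f p = 0) :
    ∀ p ∈ Icc 0 T ×ˢ Icc 0 L, f p = 0 := by
  have hf1' : ContDiffOn ℝ 1 f (K T L) := hf1
  have hbz : ∀ q ∈ K T L \ U T L, f q = 0 := by
    intro q hq
    apply hbdry
    have hfr : frontier (Ioo 0 T ×ˢ Ioo 0 L : Set (ℝ × ℝ)) = K T L \ U T L := by
      have h1 : closure (Ioo 0 T ×ˢ Ioo 0 L : Set (ℝ × ℝ)) = Icc 0 T ×ˢ Icc 0 L := by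
        rw [closure_prod_eq, closure_Ioo hT.ne, closure_Ioo hL.ne]
      rw [(isOpen_Ioo.prod isOpen_Ioo).frontier_eq, h1]
      rfl
    rw [hfr]
    exact hq
  set P := 2 * (T + L) with hPdef
  have hP0 : 0 < P := by rw [hPdef]; linarith
  have hPhalf : P / 2 = T + L := by rw [hPdef]; ring
  have hkey := key hT hL hf1' hf2 hwave hbz
  rw [← hPdef] at hkey
  set habs : ℝ → ℝ := fun s => ‖Phi T L f (fold P s)‖ with hhabs
  -- invariances
  have hevenf : ∀ s : ℝ, habs (-s) = habs s := by
    intro s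
    simp only [hhabs]
    rw [fold_neg hP0]
  have hinv2T : ∀ s : ℝ, habs (s + 2 * T) = habs s := by
    intro s
    have h1 : habs (s + 2 * T) = ‖Psi T L f (T - fold P (s + T))‖ := by
      simp only [hhabs]
      have h3 := hkey (s + 2 * T)
      rw [show s + 2 * T - T = s + T by ring] at h3
      exact h3
    have h2 : habs s = ‖Psi T L f (T - fold P (s + T))‖ := by
      simp only [hhabs]
      have h3 := hkey (-s)
      rw [show -s - T = -(s + T) by ring, fold_neg hP0 (s + T), fold_neg hP0 s] at h3
      exact h3
    rw [h1, ← h2]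
  have hinvP : ∀ s : ℝ, habs (s + P) = habs s := by
    intro s
    simp only [hhabs]
    rw [fold_add_period hP0]
  have hinv2L : ∀ s : ℝ, habs (s + 2 * L) = habs s := by
    intro s
    have h1 : habs (s + 2 * L + 2 * T) = habs (s + 2 * L) := hinv2T (s + 2 * L)
    have h2 : s + 2 * L + 2 * T = s + P := by rw [hPdef]; ring
    rw [h2, hinvP] at h1
    exact h1.symm
  -- subgroup of invariance
  let Sgrp : AddSubgroup ℝ :=
    { carrier := {g : ℝ | ∀ s, habs (s + g) = habs s}
      zero_mem' := by intro s; rw [add_zero]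
      add_mem' := by
        intro a b ha hb s
        rw [show s + (a + b) = s + a + b by ring, hb, ha]
      neg_mem' := by
        intro a ha s
        have := ha (s + -a)
        rw [show s + -a + a = s by ring] at this
        exact this.symm }
  have hle : AddSubgroup.closure ({2 * L, 2 * T} : Set ℝ) ≤ Sgrp := by
    rw [AddSubgroup.closure_le]
    intro g hg
    rcases hg with rfl | hg
    · exact hinv2L
    · rw [mem_singleton_iff] at hg
      rw [hg]
      exact hinv2T
  have hSinv : ∀ g ∈ AddSubgroup.closure ({2 * L, 2 * T} : Set ℝ), ∀ s, habs (s + g) = habs s :=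
    fun g hg => hle hg
  -- corner value
  have h00 : (((0:ℝ), (0:ℝ)) : ℝ × ℝ) ∈ K T L := ⟨⟨le_rfl, hT.le⟩, le_rfl, hL.le⟩
  have hcorner : Phi T L f 0 = 0 := by
    have ht0 := F_t_zero hT hL hf1' hbz h00 (Or.inl rfl)
    have hx0 := F_x_zero hT hL hf1' hbz h00 (Or.inl rfl)
    have hv : ((1:ℝ), (1:ℝ)) = ((1:ℝ), (0:ℝ)) + ((0:ℝ), (1:ℝ)) := by
      norm_num [Prod.ext_iff]
    show F T L f (min 0 T, 0 - min 0 T) (1, 1) = 0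
    rw [min_eq_left hT.le, sub_zero, hv, map_add, ht0, hx0, add_zero]
  -- habs vanishes identically
  have hdense := dense_subgroup hT hL hirr
  have hzero : ∀ s : ℝ, habs s = 0 := by
    intro s
    obtain ⟨u, hu, hulim⟩ := mem_closure_iff_seq_limit.mp (hdense (-s))
    have hlim0 : Tendsto (fun n => s + u n) atTop (𝓝 0) := by
      have h := hulim.const_add s
      simpa using h
    have habs0 : Tendsto (fun n => |s + u n|) atTop (𝓝 0) := by
      have := hlim0.abs
      simpa using this
    have hsmall : ∀ᶠ n in atTop, |s + u n| ≤ P / 2 :=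
      habs0.eventually_le_const (by linarith)
    have htend : Tendsto (fun n => ‖Phi T L f (|s + u n|)‖) atTop
        (𝓝 (‖Phi T L f 0‖)) := by
      apply (continuous_norm.tendsto _).comp
      apply ((cont_Phi hT hL hf1' 0 ⟨le_rfl, by linarith⟩).tendsto).comp
      apply tendsto_nhdsWithin_of_tendsto_nhds_of_eventually_within _ habs0
      filter_upwards [hsmall] with n hn
      exact ⟨abs_nonneg _, by rw [hPhalf] at hn; exact hn⟩
    have h1 : Tendsto (fun _ : ℕ => habs s) atTop (𝓝 (‖Phi T L f 0‖)) := by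
      apply htend.congr'
      filter_upwards [hsmall] with n hn
      rw [← fold_eq_abs hP0 hn]
      exact hSinv (u n) (hu n) s
    have := tendsto_nhds_unique tendsto_const_nhds h1
    rw [this, hcorner]
    simp
  -- Phi and Psi vanish on their windows
  have hPhiz : ∀ s ∈ Icc (0:ℝ) (T + L), Phi T L f s = 0 := by
    intro s hs
    have h1 : ‖Phi T L f s‖ = habs s := by
      simp only [hhabs]
      rw [fold_eq_self hP0 hs.1 (by rw [hPhalf]; exact hs.2)]
    have h2 : ‖Phi T L f s‖ = 0 := h1.trans (hzero s)
    exact norm_eq_zero.mp h2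
  have hPsiz : ∀ v ∈ Icc (-L) T, Psi T L f v = 0 := by
    intro v hv
    have hk := hkey v
    have hfold : fold P (v - T) = T - v := by
      rw [← fold_neg hP0, show -(v - T) = T - v by ring]
      exact fold_eq_self hP0 (by linarith [hv.2]) (by rw [hPhalf]; linarith [hv.1])
    rw [hfold, show T - (T - v) = v by ring] at hk
    have h2 : ‖Psi T L f v‖ = 0 := by
      rw [← hk]
      exact hzero v
    exact norm_eq_zero.mp h2
  -- the full gradient vanishes on K
  have hFz : ∀ q ∈ K T L, fderivWithin ℝ f (K T L) q = 0 := by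
    intro q hq
    obtain ⟨⟨hq1, hq2⟩, hq3, hq4⟩ := hq
    have hqK : ((q.1, q.2) : ℝ × ℝ) ∈ K T L := by
      rw [Prod.mk.eta]
      exact ⟨⟨hq1, hq2⟩, hq3, hq4⟩
    have h11 : F T L f q (1, 1) = 0 := by
      have hh := phi_eq hT hL hf1' hf2 hwave hqK
      rw [Prod.mk.eta] at hh
      rw [hh]
      exact hPhiz _ ⟨add_nonneg hq1 hq3, add_le_add hq2 hq4⟩
    have h1m : F T L f q (1, -1) = 0 := by
      have hh := psi_eq hT hL hf1' hf2 hwave hqK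
      rw [Prod.mk.eta] at hh
      rw [hh]
      exact hPsiz _ ⟨by linarith, by linarith⟩
    have hsum := clm_sum (F T L f q)
    rw [h11, h1m, add_zero] at hsum
    have h10 : F T L f q (1, 0) = 0 := by
      rcases smul_eq_zero.mp hsum.symm with h | h
      · norm_num at h
      · exact h
    have hdiff := clm_diff (F T L f q)
    rw [h11, h1m, sub_zero] at hdiff
    have h01 : F T L f q (0, 1) = 0 := by
      rcases smul_eq_zero.mp hdiff.symm with h | h
      · norm_num at h
      · exact h
    apply ContinuousLinearMap.ext
    intro v
    have hv : v = v.1 • ((1:ℝ), (0:ℝ)) + v.2 • ((0:ℝ), (1:ℝ)) := by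
      rw [Prod.ext_iff]
      constructor <;> simp
    show F T L f q v = 0
    rw [hv, map_add, map_smul, map_smul, h10, h01, smul_zero, smul_zero, add_zero]
  -- conclude
  intro p hp
  have hpK : p ∈ K T L := hp
  have hconst := convK.is_const_of_fderivWithin_eq_zero
    (hf1'.differentiableOn one_ne_zero) hFz hpK h00
  rw [hconst]
  apply hbz
  refine ⟨h00, fun hU' => ?_⟩
  exact lt_irrefl 0 hU'.1.1
end
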